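/- For all $u, v, x, y$ in the field $\mathbb{Q}_{11}$ of $11$-adic numbers, if $\tfrac{11}{480}(57u^2 - 46uv + 137v^2) = \tfrac{1}{240}(541x^2 - 228xy + 1196y^2)$ then $u = v = x = y = 0$. -/

import Mathlib

instance : Fact (Nat.Prime 11) := ⟨by norm_num⟩

private lemma unit_val' (z : ℤ_[11]) (hz : PadicInt.toZMod z ≠ 0) :
    (z : ℚ_[11]) ≠ 0 ∧ (z : ℚ_[11]).valuation = 0 := by
  have hu : IsUnit z := by
    by_contra h
    exact hz (by rwa [← RingHom.mem_ker, PadicInt.ker_toZMod, IsLocalRing.mem_maximalIdeal])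
  have hn : ‖z‖ = 1 := PadicInt.isUnit_iff.mp hu
  have hz0 : (z : ℚ_[11]) ≠ 0 := by
    rw [PadicInt.coe_ne_zero]
    intro h; rw [h] at hn; simp at hn
  refine ⟨hz0, ?_⟩
  have h1 := Padic.norm_eq_zpow_neg_valuation hz0
  rw [show ‖(z : ℚ_[11])‖ = ‖z‖ from rfl, hn] at h1
  have h2 : ((11 : ℕ) : ℝ) ^ (-(z:ℚ_[11]).valuation) = ((11:ℕ):ℝ) ^ (0:ℤ) := by
    rw [← h1]; norm_num
  have := zpow_right_injective₀ (by norm_num : (0:ℝ) < 11) (by norm_num) h2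
  omega

private lemma toZMod_small' (z : ℤ_[11]) (hz : ‖z‖ < 1) : PadicInt.toZMod z = 0 := by
  rw [← RingHom.mem_ker, PadicInt.ker_toZMod, IsLocalRing.mem_maximalIdeal]
  rwa [PadicInt.mem_nonunits]

private lemma coe_ofNat' (n : ℕ) [n.AtLeastTwo] :
    ((OfNat.ofNat n : ℤ_[11]) : ℚ_[11]) = OfNat.ofNat n := by
  calc ((OfNat.ofNat n : ℤ_[11]) : ℚ_[11]) = (((n:ℕ) : ℤ_[11]) : ℚ_[11]) :=
        congrArg _ (Nat.cast_ofNat).symm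
    _ = ((n:ℕ) : ℚ_[11]) := PadicInt.coe_natCast n
    _ = OfNat.ofNat n := Nat.cast_ofNat

private lemma coe_poly' (a b c : ℕ) [a.AtLeastTwo] [b.AtLeastTwo] [c.AtLeastTwo] (z : ℤ_[11]) :
    ((OfNat.ofNat a * z^2 - OfNat.ofNat b * z + OfNat.ofNat c : ℤ_[11]) : ℚ_[11])
      = OfNat.ofNat a * (z:ℚ_[11])^2 - OfNat.ofNat b * (z:ℚ_[11]) + OfNat.ofNat c := by
  simp [PadicInt.coe_sub, PadicInt.coe_add, PadicInt.coe_mul, PadicInt.coe_pow, coe_ofNat']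

private lemma fint' (z : ℤ_[11]) :
    ((57*z^2 - 46*z + 137 : ℤ_[11]) : ℚ_[11]) ≠ 0
      ∧ ((57*z^2 - 46*z + 137 : ℤ_[11]) : ℚ_[11]).valuation = 0 := by
  apply unit_val'
  have h : PadicInt.toZMod (57*z^2 - 46*z + 137)
      = 57 * (PadicInt.toZMod z)^2 - 46 * (PadicInt.toZMod z) + 137 := by
    simp [map_add, map_sub, map_mul, map_pow, map_ofNat]
  rw [h]
  exact (by decide : ∀ a : ZMod 11, 57 * a^2 - 46 * a + 137 ≠ 0) _

private lemma frevint' (z : ℤ_[11]) :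
    ((137*z^2 - 46*z + 57 : ℤ_[11]) : ℚ_[11]) ≠ 0
      ∧ ((137*z^2 - 46*z + 57 : ℤ_[11]) : ℚ_[11]).valuation = 0 := by
  apply unit_val'
  have h : PadicInt.toZMod (137*z^2 - 46*z + 57)
      = 137 * (PadicInt.toZMod z)^2 - 46 * (PadicInt.toZMod z) + 57 := by
    simp [map_add, map_sub, map_mul, map_pow, map_ofNat]
  rw [h]
  exact (by decide : ∀ a : ZMod 11, 137 * a^2 - 46 * a + 57 ≠ 0) _

private lemma gint' (z : ℤ_[11]) :
    ((541*z^2 - 228*z + 1196 : ℤ_[11]) : ℚ_[11]) ≠ 0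
      ∧ Even ((541*z^2 - 228*z + 1196 : ℤ_[11]) : ℚ_[11]).valuation := by
  have hmap : PadicInt.toZMod (541*z^2 - 228*z + 1196)
      = 541 * (PadicInt.toZMod z)^2 - 228 * (PadicInt.toZMod z) + 1196 := by
    simp [map_add, map_sub, map_mul, map_pow, map_ofNat]
  by_cases h2 : PadicInt.toZMod z = 2
  · have hker : PadicInt.toZMod (z - 2) = 0 := by
      rw [map_sub, h2, map_ofNat]; decide
    have hmem : z - 2 ∈ IsLocalRing.maximalIdeal ℤ_[11] := by
      rw [← PadicInt.ker_toZMod]; exact hker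
    rw [PadicInt.maximalIdeal_eq_span_p, Ideal.mem_span_singleton] at hmem
    obtain ⟨s, hs⟩ := hmem
    have hz : z = 2 + 11 * s := by
      have h11 : ((11:ℕ) : ℤ_[11]) = (11 : ℤ_[11]) := by norm_num
      rw [← sub_eq_iff_eq_add']; rw [hs, h11]
    have key : (541*z^2 - 228*z + 1196 : ℤ_[11]) = 121 * (541*s^2 + 176*s + 24) := by
      rw [hz]; ring
    have hunit : PadicInt.toZMod (541*s^2 + 176*s + 24 : ℤ_[11]) ≠ 0 := by
      have h : PadicInt.toZMod (541*s^2 + 176*s + 24)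
          = 541 * (PadicInt.toZMod s)^2 + 176 * (PadicInt.toZMod s) + 24 := by
        simp [map_add, map_mul, map_pow, map_ofNat]
      rw [h]
      exact (by decide : ∀ a : ZMod 11, 541 * a^2 + 176 * a + 24 ≠ 0) _
    obtain ⟨hne, hval⟩ := unit_val' _ hunit
    have hnat : padicValNat 11 121 = 2 := by
      have h' : (121:ℕ) = 11^2 := by norm_num
      rw [h', padicValNat.prime_pow]
    have hv121 : (121:ℚ_[11]).valuation = 2 := by
      rw [Padic.valuation_ofNat, hnat]; rfl
    have keyQ : ((541*z^2 - 228*z + 1196 : ℤ_[11]) : ℚ_[11])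
        = (121:ℚ_[11]) * ((541*s^2 + 176*s + 24 : ℤ_[11]) : ℚ_[11]) := by
      rw [key, PadicInt.coe_mul, coe_ofNat']
    rw [keyQ]
    refine ⟨mul_ne_zero (by norm_num) hne, ?_⟩
    rw [Padic.valuation_mul (by norm_num) hne, hv121, hval]
    exact ⟨1, by ring⟩
  · obtain ⟨hne, hval⟩ := unit_val' (541*z^2 - 228*z + 1196) (by
      rw [hmap]
      revert h2
      exact (by decide : ∀ a : ZMod 11, a ≠ 2 → 541 * a^2 - 228 * a + 1196 ≠ 0) _)
    exact ⟨hne, hval ▸ Even.zero⟩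

private lemma grevint' (z : ℤ_[11]) (h0 : PadicInt.toZMod z = 0) :
    ((1196*z^2 - 228*z + 541 : ℤ_[11]) : ℚ_[11]) ≠ 0
      ∧ ((1196*z^2 - 228*z + 541 : ℤ_[11]) : ℚ_[11]).valuation = 0 := by
  apply unit_val'
  have h : PadicInt.toZMod (1196*z^2 - 228*z + 541)
      = 1196 * (PadicInt.toZMod z)^2 - 228 * (PadicInt.toZMod z) + 541 := by
    simp [map_add, map_sub, map_mul, map_pow, map_ofNat]
  rw [h, h0]
  decide

private lemma fq' (w : ℚ_[11]) :
    (57*w^2 - 46*w + 137 : ℚ_[11]) ≠ 0 ∧ Even (57*w^2 - 46*w + 137 : ℚ_[11]).valuation := by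
  by_cases hw : ‖w‖ ≤ 1
  · set z : ℤ_[11] := ⟨w, hw⟩ with hz
    have hco : (z : ℚ_[11]) = w := rfl
    have h := fint' z
    rw [coe_poly' 57 46 137 z, hco] at h
    exact ⟨h.1, h.2 ▸ Even.zero⟩
  · push_neg at hw
    have hw0 : w ≠ 0 := by intro h; rw [h, norm_zero] at hw; norm_num at hw
    have hinv : ‖w⁻¹‖ ≤ 1 := by
      rw [norm_inv]
      exact inv_le_one_of_one_le₀ hw.le
    set z : ℤ_[11] := ⟨w⁻¹, hinv⟩ with hz
    have hco : (z : ℚ_[11]) = w⁻¹ := rfl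
    have h := frevint' z
    rw [coe_poly' 137 46 57 z, hco] at h
    have key : (57*w^2 - 46*w + 137 : ℚ_[11])
        = w^2 * (137*w⁻¹^2 - 46*w⁻¹ + 57) := by
      field_simp
      ring
    rw [key]
    refine ⟨mul_ne_zero (pow_ne_zero 2 hw0) h.1, ?_⟩
    rw [Padic.valuation_mul (pow_ne_zero 2 hw0) h.1, h.2, add_zero, sq,
      Padic.valuation_mul hw0 hw0]
    exact ⟨w.valuation, rfl⟩

private lemma gq' (w : ℚ_[11]) :
    (541*w^2 - 228*w + 1196 : ℚ_[11]) ≠ 0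
      ∧ Even (541*w^2 - 228*w + 1196 : ℚ_[11]).valuation := by
  by_cases hw : ‖w‖ ≤ 1
  · set z : ℤ_[11] := ⟨w, hw⟩ with hz
    have hco : (z : ℚ_[11]) = w := rfl
    have h := gint' z
    rw [coe_poly' 541 228 1196 z, hco] at h
    exact h
  · push_neg at hw
    have hw0 : w ≠ 0 := by intro h; rw [h, norm_zero] at hw; norm_num at hw
    have hinv : ‖w⁻¹‖ ≤ 1 := by
      rw [norm_inv]
      exact inv_le_one_of_one_le₀ hw.le
    set z : ℤ_[11] := ⟨w⁻¹, hinv⟩ with hz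
    have hco : (z : ℚ_[11]) = w⁻¹ := rfl
    have hsmall : PadicInt.toZMod z = 0 := by
      apply toZMod_small'
      show ‖w⁻¹‖ < 1
      rw [norm_inv]
      exact inv_lt_one_of_one_lt₀ hw
    have h := grevint' z hsmall
    rw [coe_poly' 1196 228 541 z, hco] at h
    have key : (541*w^2 - 228*w + 1196 : ℚ_[11])
        = w^2 * (1196*w⁻¹^2 - 228*w⁻¹ + 541) := by
      field_simp
      ring
    rw [key]
    refine ⟨mul_ne_zero (pow_ne_zero 2 hw0) h.1, ?_⟩
    rw [Padic.valuation_mul (pow_ne_zero 2 hw0) h.1, h.2, add_zero, sq,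
      Padic.valuation_mul hw0 hw0]
    exact ⟨w.valuation, rfl⟩

private lemma binA' (u v : ℚ_[11]) (h : ¬(u = 0 ∧ v = 0)) :
    (57*u^2 - 46*u*v + 137*v^2 : ℚ_[11]) ≠ 0
      ∧ Even (57*u^2 - 46*u*v + 137*v^2 : ℚ_[11]).valuation := by
  by_cases hv : v = 0
  · have hu : u ≠ 0 := fun h' => h ⟨h', hv⟩
    have key : (57*u^2 - 46*u*v + 137*v^2 : ℚ_[11]) = u^2 * (137*(0:ℚ_[11])^2 - 46*0 + 57) := by
      rw [hv]; ring
    rw [key]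
    have h0 := frevint' 0
    rw [coe_poly' 137 46 57 0, show ((0:ℤ_[11]):ℚ_[11]) = 0 from rfl] at h0
    obtain ⟨h1, h2⟩ := h0
    refine ⟨mul_ne_zero (pow_ne_zero 2 hu) h1, ?_⟩
    rw [Padic.valuation_mul (pow_ne_zero 2 hu) h1, h2, add_zero, sq,
      Padic.valuation_mul hu hu]
    exact ⟨u.valuation, rfl⟩
  · have key : (57*u^2 - 46*u*v + 137*v^2 : ℚ_[11])
        = v^2 * (57*(u/v)^2 - 46*(u/v) + 137) := by
      field_simp
    rw [key]
    obtain ⟨h1, h2⟩ := fq' (u/v)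
    refine ⟨mul_ne_zero (pow_ne_zero 2 hv) h1, ?_⟩
    rw [Padic.valuation_mul (pow_ne_zero 2 hv) h1, sq,
      Padic.valuation_mul hv hv]
    obtain ⟨k, hk⟩ := h2
    exact ⟨v.valuation + k, by rw [hk]; ring⟩

private lemma binB' (x y : ℚ_[11]) (h : ¬(x = 0 ∧ y = 0)) :
    (541*x^2 - 228*x*y + 1196*y^2 : ℚ_[11]) ≠ 0
      ∧ Even (541*x^2 - 228*x*y + 1196*y^2 : ℚ_[11]).valuation := by
  by_cases hy : y = 0
  · have hx : x ≠ 0 := fun h' => h ⟨h', hy⟩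
    have key : (541*x^2 - 228*x*y + 1196*y^2 : ℚ_[11]) = x^2 * (1196*(0:ℚ_[11])^2 - 228*0 + 541) := by
      rw [hy]; ring
    rw [key]
    have h0 := grevint' 0 (map_zero _)
    rw [coe_poly' 1196 228 541 0, show ((0:ℤ_[11]):ℚ_[11]) = 0 from rfl] at h0
    obtain ⟨h1, h2⟩ := h0
    refine ⟨mul_ne_zero (pow_ne_zero 2 hx) h1, ?_⟩
    rw [Padic.valuation_mul (pow_ne_zero 2 hx) h1, h2, add_zero, sq,
      Padic.valuation_mul hx hx]
    exact ⟨x.valuation, rfl⟩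
  · have key : (541*x^2 - 228*x*y + 1196*y^2 : ℚ_[11])
        = y^2 * (541*(x/y)^2 - 228*(x/y) + 1196) := by
      field_simp
    rw [key]
    obtain ⟨h1, h2⟩ := gq' (x/y)
    refine ⟨mul_ne_zero (pow_ne_zero 2 hy) h1, ?_⟩
    rw [Padic.valuation_mul (pow_ne_zero 2 hy) h1, sq,
      Padic.valuation_mul hy hy]
    obtain ⟨k, hk⟩ := h2
    exact ⟨y.valuation + k, by rw [hk]; ring⟩

/-- The quadratic form `(11/480)(57u² - 46uv + 137v²) - (1/240)(541x² - 228xy + 1196y²)`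
is anisotropic over `ℚ₁₁`. -/
theorem Z111_form_anisotropic_over_Q11 :
    ∀ u v x y : ℚ_[11],
      (11/480 : ℚ_[11]) * (57*u^2 - 46*u*v + 137*v^2)
          = (1/240 : ℚ_[11]) * (541*x^2 - 228*x*y + 1196*y^2) →
        u = 0 ∧ v = 0 ∧ x = 0 ∧ y = 0 := by
  intro u v x y h
  have key : (11 : ℚ_[11]) * (57*u^2 - 46*u*v + 137*v^2)
      = 2 * (541*x^2 - 228*x*y + 1196*y^2) := by
    linear_combination (480:ℚ_[11]) * h
  have h11 : (11:ℚ_[11]) ≠ 0 := by norm_num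
  have h2 : (2:ℚ_[11]) ≠ 0 := by norm_num
  have hv11 : (11:ℚ_[11]).valuation = 1 := by
    rw [Padic.valuation_ofNat, padicValNat_self]; rfl
  have hv2 : (2:ℚ_[11]).valuation = 0 := by
    rw [Padic.valuation_ofNat, padicValNat.eq_zero_of_not_dvd (by norm_num)]; rfl
  by_cases huv : u = 0 ∧ v = 0
  · obtain ⟨hu, hv⟩ := huv
    subst hu; subst hv
    have hB0 : (541*x^2 - 228*x*y + 1196*y^2 : ℚ_[11]) = 0 := by
      rcases mul_eq_zero.mp (show (2:ℚ_[11]) * (541*x^2 - 228*x*y + 1196*y^2) = 0 by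
        rw [← key]; ring) with hc | hc
      · exact absurd hc h2
      · exact hc
    by_cases hxy : x = 0 ∧ y = 0
    · exact ⟨rfl, rfl, hxy.1, hxy.2⟩
    · exact absurd hB0 (binB' x y hxy).1
  · exfalso
    obtain ⟨hA, hAe⟩ := binA' u v huv
    have hB : (541*x^2 - 228*x*y + 1196*y^2 : ℚ_[11]) ≠ 0 := by
      intro h0
      rw [h0, mul_zero] at key
      rcases mul_eq_zero.mp key with hc | hc
      · exact h11 hc
      · exact hA hc
    obtain ⟨hB', hBe⟩ := binB' x y (by
      rintro ⟨hx, hy⟩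
      apply hB
      rw [hx, hy]; ring)
    have hveq := congrArg Padic.valuation key
    rw [Padic.valuation_mul h11 hA, Padic.valuation_mul h2 hB',
      hv11, hv2] at hveq
    obtain ⟨a, ha⟩ := hAe
    obtain ⟨b, hb⟩ := hBe
    omega
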